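/- Let a, b be positive integers. The map Φ((λ, μ), q, s) := (λ, q, μ·s) defines a group homomorphism Φ : G_{a,b} × SU(2) × SU(3) → U(1) × SU(2) × U(3) whose image is exactly the subgroup H_{a,b} and whose kernel is {((1, ζ), 1, ζ⁻¹·1₃) : ζ ∈ U(1), ζ³ = 1}, a cyclic group of order 3. -/

import Mathlib

/-- The subgroup `G_{a,b} = {(λ, μ) ∈ U(1) × U(1) : λ^a · μ^(3b) = 1}`. -/
noncomputable def Gab (a b : ℕ) : Subgroup (Circle × Circle) where
  carrier := {p | p.1 ^ a * p.2 ^ (3 * b) = 1}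
  one_mem' := by simp
  mul_mem' := by
    intro p q hp hq
    simp only [Set.mem_setOf_eq, Prod.fst_mul, Prod.snd_mul, mul_pow] at *
    rw [mul_mul_mul_comm, hp, hq, one_mul]
  inv_mem' := by
    intro p hp
    simp only [Set.mem_setOf_eq, Prod.fst_inv, Prod.snd_inv, inv_pow] at *
    rw [← mul_inv, hp, inv_one]

/-- `SU(n)`: the special unitary group of `n × n` complex matrices, as a group. -/
noncomputable instance SUn.instGroup (n : Type*) [DecidableEq n] [Fintype n] :
    Group (Matrix.specialUnitaryGroup n ℂ) :=
  { (inferInstance : Monoid (Matrix.specialUnitaryGroup n ℂ)) with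
    inv := fun A => ⟨star A.1, by
      obtain ⟨h1, h2⟩ := Matrix.mem_specialUnitaryGroup_iff.mp A.2
      refine Matrix.mem_specialUnitaryGroup_iff.mpr ⟨Unitary.star_mem h1, ?_⟩
      rw [Matrix.star_eq_conjTranspose, Matrix.det_conjTranspose, h2, star_one]⟩
    inv_mul_cancel := fun A =>
      Subtype.ext ((Matrix.mem_specialUnitaryGroup_iff.mp A.2).1.1) }

noncomputable abbrev SU2 : Type := Matrix.specialUnitaryGroup (Fin 2) ℂ
noncomputable abbrev SU3 : Type := Matrix.specialUnitaryGroup (Fin 3) ℂ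
noncomputable abbrev U3 : Type := Matrix.unitaryGroup (Fin 3) ℂ

/-- Multiplication `μ·s` of a special unitary `3×3` matrix `s` by a scalar
`μ ∈ U(1)`, landing in `U(3)`. -/
noncomputable def circleSMul (μ : Circle) (s : SU3) : U3 :=
  ⟨(μ : ℂ) • (s : Matrix (Fin 3) (Fin 3) ℂ), by
    rw [Matrix.mem_unitaryGroup_iff]
    have hs : (s : Matrix (Fin 3) (Fin 3) ℂ) * star (s : Matrix (Fin 3) (Fin 3) ℂ) = 1 :=
      (Matrix.mem_specialUnitaryGroup_iff.mp s.2).1.2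
    rw [star_smul, smul_mul_smul_comm, hs]
    have h1 : (μ : ℂ) * star (μ : ℂ) = 1 := by
      rw [Complex.star_def, Complex.mul_conj, Circle.normSq_coe, Complex.ofReal_one]
    rw [h1, one_smul]⟩

/-- The map `Φ((λ, μ), q, s) = (λ, q, μ·s)` as a group homomorphism
`G_{a,b} × SU(2) × SU(3) →* U(1) × SU(2) × U(3)`. -/
noncomputable def Phi (a b : ℕ) : Gab a b × SU2 × SU3 →* Circle × SU2 × U3 where
  toFun x := ((x.1 : Circle × Circle).1, x.2.1,
    circleSMul (x.1 : Circle × Circle).2 x.2.2)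
  map_one' := by
    refine Prod.ext rfl (Prod.ext rfl ?_)
    apply Subtype.ext
    simp [circleSMul]
  map_mul' x y := by
    refine Prod.ext rfl (Prod.ext rfl ?_)
    refine Subtype.ext ?_
    show ((((x.1 : Circle × Circle).2 * (y.1 : Circle × Circle).2 : Circle) : ℂ)) •
        ((x.2.2 : Matrix (Fin 3) (Fin 3) ℂ) * (y.2.2 : Matrix (Fin 3) (Fin 3) ℂ)) =
      (((x.1 : Circle × Circle).2 : ℂ) • (x.2.2 : Matrix (Fin 3) (Fin 3) ℂ)) *
        (((y.1 : Circle × Circle).2 : ℂ) • (y.2.2 : Matrix (Fin 3) (Fin 3) ℂ))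
    rw [Circle.coe_mul, smul_mul_smul_comm]

/-- The subgroup `H_{a,b} = {(λ, q, m) ∈ U(1) × SU(2) × U(3) : λ^a (det m)^b = 1}`,
realized as the kernel of `(λ, q, m) ↦ λ^a (det m)^b`. -/
noncomputable def detPow (a b : ℕ) : Circle × SU2 × U3 →* ℂ where
  toFun x := (x.1 : ℂ) ^ a * ((x.2.2 : Matrix (Fin 3) (Fin 3) ℂ).det) ^ b
  map_one' := by simp
  map_mul' x y := by
    simp only [Prod.fst_mul, Prod.snd_mul, Circle.coe_mul, Submonoid.coe_mul,
      Matrix.det_mul, mul_pow]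
    ring

noncomputable def Hab (a b : ℕ) : Subgroup (Circle × SU2 × U3) := (detPow a b).ker


lemma circle_coe_pow (z : Circle) (n : ℕ) : ((z ^ n : Circle) : ℂ) = (z : ℂ) ^ n := by
  induction n with
  | zero => simp
  | succ n ih => rw [pow_succ, pow_succ, Circle.coe_mul, ih]

lemma circle_mul_star (z : Circle) : (z : ℂ) * star (z : ℂ) = 1 := by
  rw [Complex.star_def, Complex.mul_conj, Circle.normSq_coe, Complex.ofReal_one]

lemma abs_eq_one_of_mem_unitary {d : ℂ} (hd : d ∈ unitary ℂ) : ‖d‖ = 1 := by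
  have h := (Unitary.mem_iff.mp hd).2
  rw [Complex.star_def, Complex.mul_conj] at h
  have h2 : Complex.normSq d = 1 := by exact_mod_cast h
  have h3 := Complex.normSq_eq_norm_sq d
  nlinarith [norm_nonneg d]

lemma exists_circle_cube_root {d : ℂ} (hd : ‖d‖ = 1) :
    ∃ μ : Circle, (μ : ℂ) ^ 3 = d := by
  refine ⟨Circle.exp (d.arg / 3), ?_⟩
  rw [Circle.coe_exp, ← Complex.exp_nat_mul]
  have h3 : ((3 : ℕ) : ℂ) * (↑(d.arg / 3) * Complex.I) = ↑d.arg * Complex.I := by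
    push_cast; ring
  rw [h3]
  have h := Complex.norm_mul_exp_arg_mul_I d
  rwa [hd, Complex.ofReal_one, one_mul] at h

lemma smul_mem_SU3 {c : ℂ} {A : Matrix (Fin 3) (Fin 3) ℂ} (hc : c * star c = 1)
    (hA : A ∈ Matrix.unitaryGroup (Fin 3) ℂ) (hdet : c ^ 3 * A.det = 1) :
    c • A ∈ Matrix.specialUnitaryGroup (Fin 3) ℂ := by
  refine Matrix.mem_specialUnitaryGroup_iff.mpr ⟨?_, ?_⟩
  · rw [Matrix.mem_unitaryGroup_iff, star_smul, smul_mul_smul_comm,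
      Matrix.mem_unitaryGroup_iff.mp hA, hc, one_smul]
  · rw [Matrix.det_smul, Fintype.card_fin]; exact hdet

/-- **The homomorphism `Φ` realizing the gauge group `SU(A)`.**
The map `Φ((λ, μ), q, s) = (λ, q, μ·s)` defines a group homomorphism
`G_{a,b} × SU(2) × SU(3) →* U(1) × SU(2) × U(3)` whose image is exactly the
subgroup `H_{a,b}` and whose kernel is `{((1, ζ), 1, ζ⁻¹·1₃) : ζ ∈ U(1), ζ³ = 1}`,
a cyclic group of order 3. -/
theorem Phi_range_eq_Hab_and_ker_eq_Z3 (a b : ℕ) (ha : 0 < a) (hb : 0 < b) :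
    (Phi a b).range = Hab a b ∧
    (∀ x, x ∈ (Phi a b).ker ↔ ∃ ζ : Circle, ζ ^ 3 = 1 ∧
      (x.1 : Circle × Circle) = (1, ζ) ∧ x.2.1 = 1 ∧
      (x.2.2 : Matrix (Fin 3) (Fin 3) ℂ) =
        ((ζ⁻¹ : Circle) : ℂ) • (1 : Matrix (Fin 3) (Fin 3) ℂ)) ∧
    Nat.card (Phi a b).ker = 3 ∧ IsCyclic (Phi a b).ker := by
  have hker : ∀ x : Gab a b × SU2 × SU3, x ∈ (Phi a b).ker ↔ ∃ ζ : Circle, ζ ^ 3 = 1 ∧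
      (x.1 : Circle × Circle) = (1, ζ) ∧ x.2.1 = 1 ∧
      (x.2.2 : Matrix (Fin 3) (Fin 3) ℂ) =
        ((ζ⁻¹ : Circle) : ℂ) • (1 : Matrix (Fin 3) (Fin 3) ℂ) := by
    intro x
    rw [MonoidHom.mem_ker]
    constructor
    · intro h
      have h1 : ((x.1 : Circle × Circle).1 : Circle) = 1 := congrArg Prod.fst h
      have h2 : x.2.1 = 1 := congrArg (fun p => p.2.1) h
      have h3 : circleSMul (x.1 : Circle × Circle).2 x.2.2 = 1 := congrArg (fun p => p.2.2) h
      set μ : Circle := (x.1 : Circle × Circle).2 with hμ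
      have h3' : (μ : ℂ) • (x.2.2 : Matrix (Fin 3) (Fin 3) ℂ) = 1 := congrArg Subtype.val h3
      have hdet : (μ : ℂ) ^ 3 = 1 := by
        have hd := congrArg Matrix.det h3'
        rwa [Matrix.det_smul, Fintype.card_fin,
          (Matrix.mem_specialUnitaryGroup_iff.mp x.2.2.2).2, mul_one, Matrix.det_one] at hd
      refine ⟨μ, ?_, Prod.ext h1 rfl, h2, ?_⟩
      · apply Circle.coe_injective
        rw [circle_coe_pow, hdet, Circle.coe_one]
      · rw [Circle.coe_inv, ← h3', smul_smul, inv_mul_cancel₀ (Circle.coe_ne_zero μ), one_smul]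
    · rintro ⟨ζ, hζ, h1, h2, h3⟩
      have hμζ : (x.1 : Circle × Circle).2 = ζ := by rw [h1]
      refine Prod.ext ?_ (Prod.ext h2 ?_)
      · show ((x.1 : Circle × Circle).1 : Circle) = 1
        rw [h1]
      · apply Subtype.ext
        show ((x.1 : Circle × Circle).2 : ℂ) • (x.2.2 : Matrix (Fin 3) (Fin 3) ℂ) = 1
        rw [hμζ, h3, Circle.coe_inv, smul_smul, mul_inv_cancel₀ (Circle.coe_ne_zero ζ), one_smul]
  have hrange : (Phi a b).range = Hab a b := by
    ext y
    rw [MonoidHom.mem_range]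
    constructor
    · rintro ⟨x, rfl⟩
      obtain ⟨g, q', s⟩ := x
      obtain ⟨⟨l', μ⟩, hg⟩ := g
      have hg' : l' ^ a * μ ^ (3 * b) = 1 := hg
      show (l' : ℂ) ^ a * ((μ : ℂ) • (s : Matrix (Fin 3) (Fin 3) ℂ)).det ^ b = 1
      rw [Matrix.det_smul, Fintype.card_fin,
        (Matrix.mem_specialUnitaryGroup_iff.mp s.2).2, mul_one, ← pow_mul]
      have := congrArg (fun z : Circle => (z : ℂ)) hg'
      simpa only [Circle.coe_mul, circle_coe_pow, Circle.coe_one] using this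
    · intro h
      have h' : (y.1 : ℂ) ^ a * ((y.2.2 : Matrix (Fin 3) (Fin 3) ℂ).det) ^ b = 1 := h
      have hd1 : ‖((y.2.2 : Matrix (Fin 3) (Fin 3) ℂ).det)‖ = 1 :=
        abs_eq_one_of_mem_unitary (Matrix.det_of_mem_unitary y.2.2.2)
      have hdne : ((y.2.2 : Matrix (Fin 3) (Fin 3) ℂ).det) ≠ 0 := by
        intro h0; rw [h0] at hd1; simp at hd1
      obtain ⟨μ, hμ⟩ := exists_circle_cube_root hd1
      have hGmem : ((y.1, μ) : Circle × Circle) ∈ Gab a b := by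
        show y.1 ^ a * μ ^ (3 * b) = 1
        apply Circle.coe_injective
        rw [Circle.coe_mul, circle_coe_pow, circle_coe_pow, pow_mul, hμ, Circle.coe_one]
        exact h'
      have hsu : ((μ⁻¹ : Circle) : ℂ) • (y.2.2 : Matrix (Fin 3) (Fin 3) ℂ) ∈
          Matrix.specialUnitaryGroup (Fin 3) ℂ :=
        smul_mem_SU3 (circle_mul_star μ⁻¹) y.2.2.2 (by
          rw [Circle.coe_inv, inv_pow, hμ, inv_mul_cancel₀ hdne])
      refine ⟨(⟨(y.1, μ), hGmem⟩, y.2.1, ⟨_, hsu⟩), ?_⟩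
      refine Prod.ext rfl (Prod.ext rfl ?_)
      apply Subtype.ext
      show (μ : ℂ) • (((μ⁻¹ : Circle) : ℂ) • (y.2.2 : Matrix (Fin 3) (Fin 3) ℂ)) =
        (y.2.2 : Matrix (Fin 3) (Fin 3) ℂ)
      rw [smul_smul, Circle.coe_inv, mul_inv_cancel₀ (Circle.coe_ne_zero μ), one_smul]
  have h3p : Fact (Nat.Prime 3) := ⟨by norm_num⟩
  let g : (Phi a b).ker →* Circle :=
    (MonoidHom.snd Circle Circle).comp ((Gab a b).subtype.comp
      ((MonoidHom.fst (Gab a b) (SU2 × SU3)).comp (Phi a b).ker.subtype))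
  let f : (Phi a b).ker →* ℂˣ := Circle.toUnits.comp g
  have hfval : ∀ x : (Phi a b).ker,
      ((f x : ℂˣ) : ℂ) = (((x : Gab a b × SU2 × SU3).1 : Circle × Circle).2 : ℂ) :=
    fun x => rfl
  have hinj : Function.Injective f := by
    rw [injective_iff_map_eq_one]
    intro x hx
    obtain ⟨ζ, hζ3, h1, h2, h3⟩ := (hker x.1).mp x.2
    have hμζ : ((x : Gab a b × SU2 × SU3).1 : Circle × Circle).2 = ζ := by rw [h1]
    have hζ1 : ζ = 1 := by
      apply Circle.coe_injective
      have hv : ((f x : ℂˣ) : ℂ) = 1 := by rw [hx]; rfl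
      rwa [hfval x, hμζ] at hv
    apply Subtype.ext
    refine Prod.ext ?_ (Prod.ext h2 ?_)
    · apply Subtype.ext
      show ((x : Gab a b × SU2 × SU3).1 : Circle × Circle) = 1
      rw [h1, hζ1]
      rfl
    · apply Subtype.ext
      show ((x : Gab a b × SU2 × SU3).2.2 : Matrix (Fin 3) (Fin 3) ℂ) = 1
      rw [h3, hζ1, inv_one, Circle.coe_one, one_smul]
  have hfr : f.range = rootsOfUnity 3 ℂ := by
    ext u
    rw [MonoidHom.mem_range, mem_rootsOfUnity']
    constructor
    · rintro ⟨x, rfl⟩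
      obtain ⟨ζ, hζ3, h1, h2, h3⟩ := (hker x.1).mp x.2
      have hμζ : ((x : Gab a b × SU2 × SU3).1 : Circle × Circle).2 = ζ := by rw [h1]
      show ((f x : ℂˣ) : ℂ) ^ 3 = 1
      rw [hfval x, hμζ, ← circle_coe_pow, hζ3, Circle.coe_one]
    · intro hu3
      have habs : ‖(u : ℂ)‖ = 1 := by
        have h1 : ‖(u : ℂ)‖ ^ 3 = 1 := by
          rw [← norm_pow, hu3, norm_one]
        nlinarith [norm_nonneg (u : ℂ), sq_nonneg (‖(u : ℂ)‖ - 1), sq_nonneg (‖(u : ℂ)‖ + 1)]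
      set ζ : Circle := ⟨(u : ℂ), mem_sphere_zero_iff_norm.2 (by
        exact habs)⟩ with hζdef
      have hzc : (ζ : ℂ) ^ 3 = 1 := hu3
      have hζ3 : ζ ^ 3 = 1 := by
        apply Circle.coe_injective
        rw [circle_coe_pow, hzc, Circle.coe_one]
      have hGmem : ((1, ζ) : Circle × Circle) ∈ Gab a b := by
        show (1 : Circle) ^ a * ζ ^ (3 * b) = 1
        rw [one_pow, one_mul, pow_mul, hζ3, one_pow]
      have hsu : ((ζ⁻¹ : Circle) : ℂ) • (1 : Matrix (Fin 3) (Fin 3) ℂ) ∈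
          Matrix.specialUnitaryGroup (Fin 3) ℂ :=
        smul_mem_SU3 (circle_mul_star ζ⁻¹) (one_mem _) (by
          rw [Matrix.det_one, mul_one, Circle.coe_inv, inv_pow, hzc, inv_one])
      have hx0ker : ((⟨(1, ζ), hGmem⟩, 1, ⟨_, hsu⟩) : Gab a b × SU2 × SU3) ∈ (Phi a b).ker :=
        (hker _).mpr ⟨ζ, hζ3, rfl, rfl, rfl⟩
      exact ⟨⟨_, hx0ker⟩, Units.ext rfl⟩
  have hcard : Nat.card (Phi a b).ker = 3 := by
    have e1 : Nat.card (Phi a b).ker = Nat.card f.range :=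
      Nat.card_congr (Equiv.ofInjective f hinj)
    rw [e1, hfr, Complex.card_rootsOfUnity]
  exact ⟨hrange, hker, hcard, isCyclic_of_prime_card hcard⟩
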